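/- Let P be a Pellian polynomial of degree d ≥ 1 (of either parity), and let a ∈ [0,1] satisfy cos(π/(2d)) ≤ a. Then |P(a)| ≥ |T_d(a)|. -/

import Mathlib

/-- A polynomial over `ℂ` is an even function. -/
def IsEvenPoly (P : Polynomial ℂ) : Prop := ∀ x : ℂ, P.eval (-x) = P.eval x

/-- A polynomial over `ℂ` is an odd function. -/
def IsOddPoly (P : Polynomial ℂ) : Prop := ∀ x : ℂ, P.eval (-x) = -P.eval x

/-- `P, Q ∈ ℂ[x]` form a Pell pair: fixed and opposite parity, and
`|P(x)|² + (1 - x²)|Q(x)|² = 1` on `[-1,1]`. -/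
def PellPair (P Q : Polynomial ℂ) : Prop :=
  ((IsEvenPoly P ∧ IsOddPoly Q) ∨ (IsOddPoly P ∧ IsEvenPoly Q)) ∧
    ∀ x : ℝ, x ∈ Set.Icc (-1 : ℝ) 1 →
      ‖P.eval (x : ℂ)‖ ^ 2 + (1 - x ^ 2) * ‖Q.eval (x : ℂ)‖ ^ 2 = 1

/-- A polynomial is Pellian if it is the first member of some Pell pair. -/
def Pellian (P : Polynomial ℂ) : Prop := ∃ Q : Polynomial ℂ, PellPair P Q

open Polynomial Finset

noncomputable def nodeAngle (d k : ℕ) : ℝ := (2*k+1) * Real.pi / (2*d)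
noncomputable def node (d k : ℕ) : ℝ := Real.cos (nodeAngle d k)

lemma nodeAngle_pos {d k : ℕ} (hd : 1 ≤ d) : 0 < nodeAngle d k := by
  have hd' : (0:ℝ) < d := by exact_mod_cast hd
  apply div_pos (by positivity) (by positivity)

lemma nodeAngle_lt_pi {d k : ℕ} (hk : k < d) : nodeAngle d k < Real.pi := by
  have hd' : (0:ℝ) < d := by exact_mod_cast (Nat.pos_of_ne_zero (by omega))
  have hk2 : (k:ℝ)+1 ≤ d := by exact_mod_cast hk
  rw [nodeAngle, div_lt_iff₀ (by positivity)]
  nlinarith [Real.pi_pos]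

lemma sin_nodeAngle_pos {d k : ℕ} (hd : 1 ≤ d) (hk : k < d) : 0 < Real.sin (nodeAngle d k) :=
  Real.sin_pos_of_pos_of_lt_pi (nodeAngle_pos hd) (nodeAngle_lt_pi hk)

lemma nodeAngle_lt {d : ℕ} (hd : 1 ≤ d) {k l : ℕ} (h : k < l) :
    nodeAngle d k < nodeAngle d l := by
  have hd' : (0:ℝ) < d := by exact_mod_cast hd
  have hk' : (k:ℝ) < l := by exact_mod_cast h
  rw [nodeAngle, nodeAngle]
  gcongr

lemma node_strictAnti {d : ℕ} (hd : 1 ≤ d) {k l : ℕ} (h : k < l) (hl : l < d) :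
    node d l < node d k :=
  Real.cos_lt_cos_of_nonneg_of_le_pi (le_of_lt (nodeAngle_pos hd))
    (le_of_lt (nodeAngle_lt_pi hl)) (nodeAngle_lt hd h)

lemma node_le {d k : ℕ} (hd : 1 ≤ d) (hk : k < d) : node d k ≤ Real.cos (Real.pi / (2*d)) := by
  have h0 : Real.pi / (2*d) = nodeAngle d 0 := by rw [nodeAngle]; push_cast; ring
  rw [h0]
  rcases Nat.eq_zero_or_pos k with rfl | hkpos
  · exact le_refl _
  · exact le_of_lt (node_strictAnti hd hkpos hk)

lemma sin_d_nodeAngle {d k : ℕ} (hd : 1 ≤ d) : Real.sin (d * nodeAngle d k) = (-1)^k := by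
  have hd0 : (d:ℝ) ≠ 0 := by
    have : (0:ℝ) < d := by exact_mod_cast hd
    positivity
  have : (d:ℝ) * nodeAngle d k = k * Real.pi + Real.pi/2 := by
    rw [nodeAngle]; field_simp
  rw [this, Real.sin_add, Real.sin_nat_mul_pi, Real.cos_pi_div_two, Real.sin_pi_div_two]
  have h2 := Real.cos_add_nat_mul_pi 0 k
  simp only [zero_add, Real.cos_zero, mul_one] at h2
  rw [h2]; ring

lemma twoX_degree_le (R : Type*) [CommRing R] : (2*X : R[X]).degree ≤ 1 := by
  apply (degree_mul_le _ _).trans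
  have h2 : (2:R[X]).degree ≤ 0 := by simpa using degree_natCast_le (R := R) 2
  calc (2:R[X]).degree + X.degree ≤ 0 + 1 := add_le_add h2 degree_X_le
    _ = 1 := by rfl

lemma U_degree_le (R : Type*) [CommRing R] (n : ℕ) :
    (Polynomial.Chebyshev.U R (n:ℤ)).degree ≤ n := by
  induction n using Nat.strong_induction_on with
  | _ n ih =>
    match n with
    | 0 => simp [Polynomial.Chebyshev.U_zero]
    | 1 =>
        rw [Nat.cast_one, Polynomial.Chebyshev.U_one]
        exact (twoX_degree_le R).trans (by norm_num)
    | (n+2) =>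
      have h : (((n:ℕ)+2 : ℕ) : ℤ) = ((n:ℤ)+2) := by push_cast; ring
      rw [h, Polynomial.Chebyshev.U_add_two]
      apply (degree_sub_le _ _).trans
      apply max_le
      · apply (degree_mul_le _ _).trans
        have h1 : ((n+1 : ℕ) : ℤ) = (n:ℤ)+1 := by push_cast; ring
        have := ih (n+1) (by omega)
        rw [h1] at this
        calc (2*X : R[X]).degree + (Polynomial.Chebyshev.U R ((n:ℤ)+1)).degree
            ≤ 1 + (n+1 : ℕ) := add_le_add (twoX_degree_le R) this
          _ ≤ ((n+2 : ℕ) : WithBot ℕ) := by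
              rw [show ((1:WithBot ℕ)) = ((1:ℕ) : WithBot ℕ) from rfl, ← Nat.cast_add]
              exact Nat.cast_le.mpr (by omega)
      · exact (ih n (by omega)).trans (Nat.cast_le.mpr (by omega))

lemma U_node_eval {d k : ℕ} (hd : 1 ≤ d) (hk : k < d) :
    (Polynomial.Chebyshev.U ℝ ((d:ℤ)-1)).eval (node d k)
      = (-1)^k / Real.sin (nodeAngle d k) := by
  have h := Polynomial.Chebyshev.U_real_cos (nodeAngle d k) ((d:ℤ)-1)
  push_cast at h
  rw [eq_div_iff (ne_of_gt (sin_nodeAngle_pos hd hk))]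
  rw [node, h, show ((d:ℝ)-1+1) = (d:ℝ) by ring]
  exact sin_d_nodeAngle hd

local notation "conj'" => starRingEnd ℂ

lemma eval_map_conj (P : Polynomial ℂ) (x : ℝ) :
    (P.map conj').eval (x:ℂ) = conj' (P.eval (x:ℂ)) := by
  have h : ((x:ℂ)) = conj' (x:ℂ) := by simp [Complex.conj_ofReal]
  rw [eval_map, h, eval₂_at_apply]
  simp [Complex.conj_ofReal]

lemma pell_poly_identity (P Q : Polynomial ℂ)
    (h : ∀ x : ℝ, x ∈ Set.Icc (-1:ℝ) 1 →
      ‖P.eval (x:ℂ)‖ ^ 2 + (1 - x ^ 2) * ‖Q.eval (x:ℂ)‖ ^ 2 = 1) :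
    P * P.map conj' + (1 - X^2) * (Q * Q.map conj') = 1 := by
  apply eq_of_infinite_eval_eq
  apply Set.Infinite.mono (s := ((↑) '' Set.Icc (-1:ℝ) 1 : Set ℂ))
  · rintro z ⟨x, hx, rfl⟩
    have hx' := h x hx
    simp only [Set.mem_setOf_eq, eval_add, eval_mul, eval_sub, eval_one, eval_pow, eval_X,
      eval_map_conj]
    rw [Complex.mul_conj, Complex.mul_conj]
    have h2 := congrArg Complex.ofReal hx'
    push_cast [Complex.normSq_eq_norm_sq] at h2 ⊢
    linear_combination h2
  · exact Set.Infinite.image (fun a _ b _ hab => Complex.ofReal_injective hab)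
      (Set.Icc_infinite (by norm_num))

lemma deg_Q_lt (P Q : Polynomial ℂ) (d : ℕ) (hd1 : 1 ≤ d) (hdeg : P.natDegree = d)
    (hid : P * P.map conj' + (1 - X^2) * (Q * Q.map conj') = 1) :
    Q.degree < (d : WithBot ℕ) := by
  have hP0 : P ≠ 0 := fun hh => by rw [hh, Polynomial.natDegree_zero] at hdeg; omega
  have hP'0 : P.map conj' ≠ 0 := (Polynomial.map_ne_zero_iff (RingHom.injective _)).mpr hP0
  rcases eq_or_ne Q 0 with rfl | hQ0
  · rw [degree_zero]; exact WithBot.bot_lt_coe d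
  · have hQ'0 : Q.map conj' ≠ 0 := (Polynomial.map_ne_zero_iff (RingHom.injective _)).mpr hQ0
    have hPP : (P * P.map conj').natDegree = 2*d := by
      rw [natDegree_mul hP0 hP'0, natDegree_map, hdeg]; ring
    have hX2 : ((1 : Polynomial ℂ) - X^2).natDegree = 2 := by
      compute_degree!
    have hX2ne : ((1 : Polynomial ℂ) - X^2) ≠ 0 := fun h => by simp [h] at hX2
    -- (1 - X^2) * (Q * Q') = 1 - P * P'
    have key : (1 - X^2) * (Q * Q.map conj') = 1 - P * P.map conj' := by
      linear_combination hid
    have hRHS : ((1:Polynomial ℂ) - P * P.map conj').natDegree = 2*d := by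
      rw [natDegree_sub_eq_right_of_natDegree_lt]
      · exact hPP
      · rw [hPP, natDegree_one]; omega
    have hLHS : ((1 - X^2) * (Q * Q.map conj')).natDegree
        = 2 + (Q.natDegree + Q.natDegree) := by
      rw [natDegree_mul hX2ne (mul_ne_zero hQ0 hQ'0), hX2,
        natDegree_mul hQ0 hQ'0, natDegree_map]
    have : 2 + (Q.natDegree + Q.natDegree) = 2*d := by rw [← hLHS, key, hRHS]
    have hQd : Q.natDegree < d := by omega
    calc Q.degree ≤ (Q.natDegree : WithBot ℕ) := degree_le_natDegree
      _ < (d : WithBot ℕ) := by exact_mod_cast hQd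

lemma lagrange_eval_eq {F : Type*} [Field F] {d : ℕ} (hd : 1 ≤ d) (f : F[X])
    (v : Fin d → F) (hv : Function.Injective v) (hdeg : f.degree < (d : WithBot ℕ)) (a : F) :
    f.eval a = ∑ i : Fin d, f.eval (v i) *
      ∏ j ∈ Finset.univ.erase i, (a - v j) / (v i - v j) := by
  have hcard : (#(Finset.univ : Finset (Fin d)) : WithBot ℕ) = (d : WithBot ℕ) := by
    simp
  have hrep := Lagrange.eq_interpolate (f := f) (s := (Finset.univ : Finset (Fin d))) (v := v)
    hv.injOn (by rw [hcard]; exact hdeg)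
  conv_lhs => rw [hrep]
  rw [Lagrange.interpolate_apply, eval_finset_sum]
  apply Finset.sum_congr rfl
  intro i _
  rw [eval_mul, eval_C, Lagrange.basis, eval_prod]
  congr 1
  apply Finset.prod_congr rfl
  intro j _
  rw [Lagrange.basisDivisor, eval_mul, eval_C, eval_sub, eval_X, eval_C]
  rw [div_eq_inv_mul]

lemma abs_L_eq {d : ℕ} (hd : 1 ≤ d) (a : ℝ) (hge : ∀ j : Fin d, node d j ≤ a) (i : Fin d) :
    |∏ j ∈ Finset.univ.erase i, (a - node d j) / (node d i - node d j)|
      = (-1)^(i:ℕ) * ∏ j ∈ Finset.univ.erase i, (a - node d j) / (node d i - node d j) := by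
  set f : Fin d → ℝ := fun j => (a - node d j) / (node d i - node d j) with hf
  rw [Finset.abs_prod]
  have habs : ∀ j ∈ Finset.univ.erase i, |f j| = (if j < i then (-1:ℝ) else 1) * f j := by
    intro j hj
    have hji : j ≠ i := Finset.mem_erase.mp hj |>.1
    have hnum : 0 ≤ a - node d j := sub_nonneg.mpr (hge j)
    rcases lt_or_gt_of_ne hji with hlt | hgt
    · have hden : node d i - node d j < 0 := by
        have := node_strictAnti hd (show (j:ℕ) < (i:ℕ) from hlt) i.isLt
        linarith
      have : f j ≤ 0 := div_nonpos_of_nonneg_of_nonpos hnum hden.le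
      rw [if_pos hlt, abs_of_nonpos this]; ring
    · have hden : 0 < node d i - node d j := by
        have := node_strictAnti hd (show (i:ℕ) < (j:ℕ) from hgt) j.isLt
        linarith
      have : 0 ≤ f j := div_nonneg hnum hden.le
      rw [if_neg (not_lt.mpr hgt.le), abs_of_nonneg this]; ring
  rw [Finset.prod_congr rfl habs, Finset.prod_mul_distrib]
  congr 1
  rw [Finset.prod_ite (fun _ => (-1:ℝ)) (fun _ => (1:ℝ)), Finset.prod_const, Finset.prod_const,
    one_pow, mul_one]
  congr 1
  have : (Finset.univ.erase i).filter (fun j => j < i) = Finset.Iio i := by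
    ext j
    simp only [Finset.mem_filter, Finset.mem_erase, Finset.mem_univ, true_and, Finset.mem_Iio,
      and_iff_right_iff_imp]
    exact fun h => ⟨ne_of_lt h, trivial⟩
  rw [this, Fin.card_Iio]

lemma Q_bound {d : ℕ} (hd : 1 ≤ d) (Q : Polynomial ℂ) (hQdeg : Q.degree < (d : WithBot ℕ))
    (hval : ∀ i : Fin d, ‖Q.eval ((node d i : ℝ) : ℂ)‖
      ≤ 1 / Real.sin (nodeAngle d i))
    (a : ℝ) (hge : ∀ j : Fin d, node d j ≤ a) :
    ‖Q.eval (a : ℂ)‖ ≤ (Polynomial.Chebyshev.U ℝ ((d:ℤ)-1)).eval a := by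
  set L : Fin d → ℝ := fun i =>
    ∏ j ∈ Finset.univ.erase i, (a - node d j) / (node d i - node d j) with hL
  have hvinj : Function.Injective (fun i : Fin d => node d (i:ℕ)) := by
    intro i j hij
    by_contra hne
    rcases lt_or_gt_of_ne (fun h => hne (Fin.ext h) : (i:ℕ) ≠ (j:ℕ)) with h | h
    · exact absurd hij (ne_of_gt (node_strictAnti hd h j.isLt))
    · exact absurd hij (ne_of_lt (node_strictAnti hd h i.isLt))
  have hvinjC : Function.Injective (fun i : Fin d => ((node d (i:ℕ) : ℝ) : ℂ)) :=
    fun i j hij => hvinj (Complex.ofReal_injective hij)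
  -- Lagrange for Q over ℂ
  have hQa : Q.eval (a:ℂ) = ∑ i : Fin d, Q.eval ((node d i : ℝ) : ℂ) * ((L i : ℝ) : ℂ) := by
    rw [lagrange_eval_eq hd Q _ hvinjC hQdeg (a:ℂ)]
    apply Finset.sum_congr rfl
    intro i _
    congr 1
    rw [hL]
    push_cast
    rfl
  -- Lagrange for U over ℝ
  have hUdeg : (Polynomial.Chebyshev.U ℝ ((d:ℤ)-1)).degree < (d : WithBot ℕ) := by
    have h1 : ((d:ℤ)-1) = ((d-1 : ℕ) : ℤ) := by
      have := Nat.cast_sub (R := ℤ) hd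
      omega
    rw [h1]
    exact lt_of_le_of_lt (U_degree_le ℝ (d-1)) (by exact_mod_cast (by omega : d - 1 < d))
  have hUa : (Polynomial.Chebyshev.U ℝ ((d:ℤ)-1)).eval a
      = ∑ i : Fin d, ((-1)^(i:ℕ) / Real.sin (nodeAngle d i)) * L i := by
    rw [lagrange_eval_eq hd _ _ hvinj hUdeg a]
    apply Finset.sum_congr rfl
    intro i _
    rw [U_node_eval hd i.isLt]
  have hLabs : ∀ i : Fin d, |L i| = (-1)^(i:ℕ) * L i := fun i => abs_L_eq hd a hge i
  have hsin : ∀ i : Fin d, 0 < Real.sin (nodeAngle d i) :=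
    fun i => sin_nodeAngle_pos hd i.isLt
  calc ‖Q.eval (a:ℂ)‖
      = ‖∑ i : Fin d, Q.eval ((node d i : ℝ) : ℂ) * ((L i : ℝ) : ℂ)‖ := by rw [hQa]
    _ ≤ ∑ i : Fin d, ‖Q.eval ((node d i : ℝ) : ℂ) * ((L i : ℝ) : ℂ)‖ :=
        norm_sum_le _ _
    _ = ∑ i : Fin d, ‖Q.eval ((node d i : ℝ) : ℂ)‖ * |L i| := by
        apply Finset.sum_congr rfl
        intro i _
        rw [norm_mul, Complex.norm_real, Real.norm_eq_abs]
    _ ≤ ∑ i : Fin d, (1 / Real.sin (nodeAngle d i)) * |L i| := by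
        apply Finset.sum_le_sum
        intro i _
        exact mul_le_mul_of_nonneg_right (hval i) (abs_nonneg _)
    _ = ∑ i : Fin d, ((-1)^(i:ℕ) / Real.sin (nodeAngle d i)) * L i := by
        apply Finset.sum_congr rfl
        intro i _
        rw [hLabs i]
        field_simp
    _ = (Polynomial.Chebyshev.U ℝ ((d:ℤ)-1)).eval a := hUa.symm

theorem pellian_ge_chebyshev_near_one (P : Polynomial ℂ) (hP : Pellian P)
    (d : ℕ) (hdeg : P.natDegree = d) (hd1 : 1 ≤ d)
    (a : ℝ) (ha : a ∈ Set.Icc (0 : ℝ) 1) (ha' : Real.cos (Real.pi / (2 * d)) ≤ a) :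
    |(Polynomial.Chebyshev.T ℝ d).eval a| ≤ ‖P.eval (a : ℂ)‖ := by
  obtain ⟨Q, _, hPell⟩ := hP
  obtain ⟨h0a, ha1⟩ := ha
  have hid := pell_poly_identity P Q hPell
  have hQdeg := deg_Q_lt P Q d hd1 hdeg hid
  have hval : ∀ i : Fin d,
      ‖Q.eval ((node d i : ℝ) : ℂ)‖ ≤ 1 / Real.sin (nodeAngle d i) := by
    intro i
    have hmem : node d i ∈ Set.Icc (-1:ℝ) 1 := ⟨Real.neg_one_le_cos _, Real.cos_le_one _⟩
    have h := hPell (node d i) hmem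
    have hsin := sin_nodeAngle_pos hd1 i.isLt
    have hsq : 1 - node d i ^ 2 = Real.sin (nodeAngle d i) ^ 2 := by
      rw [node, Real.sin_sq]
    rw [hsq] at h
    have hQnn : 0 ≤ ‖Q.eval ((node d i : ℝ) : ℂ)‖ := norm_nonneg _
    rw [le_div_iff₀ hsin]
    nlinarith [sq_nonneg (‖P.eval ((node d i : ℝ) : ℂ)‖),
      mul_nonneg hQnn hsin.le]
  have hge : ∀ j : Fin d, node d j ≤ a := fun j => (node_le hd1 j.isLt).trans ha'
  have hQa := Q_bound hd1 Q hQdeg hval a hge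
  set φ := Real.arccos a with hφ
  have hcos : Real.cos φ = a := Real.cos_arccos (by linarith) ha1
  have hT : (Polynomial.Chebyshev.T ℝ (d:ℤ)).eval a = Real.cos (d * φ) := by
    rw [← hcos, Polynomial.Chebyshev.T_real_cos]
    norm_num
  have hU : (Polynomial.Chebyshev.U ℝ ((d:ℤ)-1)).eval a * Real.sin φ = Real.sin (d * φ) := by
    rw [← hcos, Polynomial.Chebyshev.U_real_cos]
    push_cast
    ring_nf
  have hsinφ : 1 - a^2 = Real.sin φ ^ 2 := by rw [← hcos, Real.sin_sq]
  have hPa := hPell a ⟨by linarith, ha1⟩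
  have hQnn : 0 ≤ ‖Q.eval (a:ℂ)‖ := norm_nonneg _
  have hUnn : 0 ≤ (Polynomial.Chebyshev.U ℝ ((d:ℤ)-1)).eval a := hQnn.trans hQa
  have hQU : (1-a^2) * ‖Q.eval (a:ℂ)‖^2
      ≤ (1-a^2) * ((Polynomial.Chebyshev.U ℝ ((d:ℤ)-1)).eval a)^2 := by
    apply mul_le_mul_of_nonneg_left _ (by nlinarith)
    exact pow_le_pow_left₀ hQnn hQa 2
  have hUsq : (1-a^2) * ((Polynomial.Chebyshev.U ℝ ((d:ℤ)-1)).eval a)^2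
      = Real.sin (d * φ)^2 := by
    rw [hsinφ, ← hU]; ring
  have hfin : |(Polynomial.Chebyshev.T ℝ (d:ℤ)).eval a|^2
      ≤ ‖P.eval (a:ℂ)‖^2 := by
    rw [sq_abs, hT]
    nlinarith [Real.sin_sq_add_cos_sq ((d:ℝ) * φ)]
  have := Real.sqrt_le_sqrt hfin
  rwa [Real.sqrt_sq (abs_nonneg _), Real.sqrt_sq (norm_nonneg _)] at this
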